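/- Let k ≥ 1, let Λ₁ ≤ Λ₂ ≤ … ≤ Λₖ ≤ Λ_{k+1} be real numbers, let δ₁ ≥ δ₂ ≥ … ≥ δ_k > 0 be a non-increasing sequence of positive real numbers, and let (b_{ij})_{1≤i,j≤k} be real numbers that are symmetric in i and j (b_{ij} = b_{ji}). Then Σ_{i,j=1}^k δ_i (Λ_{k+1} − Λ_i)(Λ_i − Λ_j)² b_{ij}² + Σ_{i,j=1}^k δ_i (Λ_{k+1} − Λ_i)²(Λ_i − Λ_j) b_{ij}² = (1/2) Σ_{i,j=1}^k (Λ_{k+1} − Λ_i)(Λ_{k+1} − Λ_j)(Λ_i − Λ_j)(δ_i − δ_j) b_{ij}², and this quantity is ≤ 0. -/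
import Mathlib


/-- The symmetrization identity and sign for the b_{ij} cross terms. -/
theorem symmetrization_identity
    (k : ℕ) (hk : 1 ≤ k)
    (Λ : Fin (k + 1) → ℝ) (hΛmono : Monotone Λ)
    (δ : Fin k → ℝ) (hδpos : ∀ i, 0 < δ i) (hδanti : Antitone δ)
    (b : Fin k → Fin k → ℝ) (hb_symm : ∀ i j, b i j = b j i) :
    (∑ i : Fin k, ∑ j : Fin k,
        δ i * (Λ (Fin.last k) - Λ i.castSucc) * (Λ i.castSucc - Λ j.castSucc) ^ 2 * (b i j) ^ 2
      + ∑ i : Fin k, ∑ j : Fin k,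
        δ i * (Λ (Fin.last k) - Λ i.castSucc) ^ 2 * (Λ i.castSucc - Λ j.castSucc) * (b i j) ^ 2)
      = (1 / 2) * ∑ i : Fin k, ∑ j : Fin k,
        (Λ (Fin.last k) - Λ i.castSucc) * (Λ (Fin.last k) - Λ j.castSucc)
          * (Λ i.castSucc - Λ j.castSucc) * (δ i - δ j) * (b i j) ^ 2
    ∧ (∑ i : Fin k, ∑ j : Fin k,
        δ i * (Λ (Fin.last k) - Λ i.castSucc) * (Λ i.castSucc - Λ j.castSucc) ^ 2 * (b i j) ^ 2
      + ∑ i : Fin k, ∑ j : Fin k,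
        δ i * (Λ (Fin.last k) - Λ i.castSucc) ^ 2 * (Λ i.castSucc - Λ j.castSucc) * (b i j) ^ 2)
      ≤ 0 := by
  set L := Λ (Fin.last k) with hL
  have hA : ∀ i : Fin k, 0 ≤ L - Λ i.castSucc := fun i =>
    sub_nonneg.2 (hΛmono (Fin.le_last i.castSucc))
  -- combine the two sums
  have h1 : (∑ i : Fin k, ∑ j : Fin k,
        δ i * (L - Λ i.castSucc) * (Λ i.castSucc - Λ j.castSucc) ^ 2 * (b i j) ^ 2
      + ∑ i : Fin k, ∑ j : Fin k,
        δ i * (L - Λ i.castSucc) ^ 2 * (Λ i.castSucc - Λ j.castSucc) * (b i j) ^ 2)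
      = ∑ i : Fin k, ∑ j : Fin k,
        δ i * (L - Λ i.castSucc) * (L - Λ j.castSucc)
          * (Λ i.castSucc - Λ j.castSucc) * (b i j) ^ 2 := by
    rw [← Finset.sum_add_distrib]
    refine Finset.sum_congr rfl fun i _ => ?_
    rw [← Finset.sum_add_distrib]
    exact Finset.sum_congr rfl fun j _ => by ring
  -- symmetrization
  have h2 : (2 : ℝ) * (∑ i : Fin k, ∑ j : Fin k,
        δ i * (L - Λ i.castSucc) * (L - Λ j.castSucc)
          * (Λ i.castSucc - Λ j.castSucc) * (b i j) ^ 2)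
      = ∑ i : Fin k, ∑ j : Fin k,
        (L - Λ i.castSucc) * (L - Λ j.castSucc)
          * (Λ i.castSucc - Λ j.castSucc) * (δ i - δ j) * (b i j) ^ 2 := by
    have hswap : (∑ i : Fin k, ∑ j : Fin k,
        δ i * (L - Λ i.castSucc) * (L - Λ j.castSucc)
          * (Λ i.castSucc - Λ j.castSucc) * (b i j) ^ 2)
      = ∑ i : Fin k, ∑ j : Fin k,
        δ j * (L - Λ j.castSucc) * (L - Λ i.castSucc)
          * (Λ j.castSucc - Λ i.castSucc) * (b j i) ^ 2 := Finset.sum_comm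
    rw [two_mul]
    nth_rewrite 2 [hswap]
    rw [← Finset.sum_add_distrib]
    refine Finset.sum_congr rfl fun i _ => ?_
    rw [← Finset.sum_add_distrib]
    refine Finset.sum_congr rfl fun j _ => ?_
    rw [hb_symm j i]; ring
  -- pointwise sign
  have hpt : ∀ i j : Fin k,
      (L - Λ i.castSucc) * (L - Λ j.castSucc)
        * (Λ i.castSucc - Λ j.castSucc) * (δ i - δ j) * (b i j) ^ 2 ≤ 0 := by
    intro i j
    have hnn : 0 ≤ (L - Λ i.castSucc) * (L - Λ j.castSucc) * (b i j) ^ 2 :=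
      mul_nonneg (mul_nonneg (hA i) (hA j)) (sq_nonneg _)
    have hnp : (Λ i.castSucc - Λ j.castSucc) * (δ i - δ j) ≤ 0 := by
      rcases le_total i j with h | h
      · exact mul_nonpos_of_nonpos_of_nonneg
          (sub_nonpos.2 (hΛmono (Fin.castSucc_le_castSucc_iff.2 h)))
          (sub_nonneg.2 (hδanti h))
      · exact mul_nonpos_of_nonneg_of_nonpos
          (sub_nonneg.2 (hΛmono (Fin.castSucc_le_castSucc_iff.2 h)))
          (sub_nonpos.2 (hδanti h))
    calc (L - Λ i.castSucc) * (L - Λ j.castSucc)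
        * (Λ i.castSucc - Λ j.castSucc) * (δ i - δ j) * (b i j) ^ 2
        = ((L - Λ i.castSucc) * (L - Λ j.castSucc) * (b i j) ^ 2)
          * ((Λ i.castSucc - Λ j.castSucc) * (δ i - δ j)) := by ring
      _ ≤ 0 := mul_nonpos_of_nonneg_of_nonpos hnn hnp
  have hsum : (∑ i : Fin k, ∑ j : Fin k,
      (L - Λ i.castSucc) * (L - Λ j.castSucc)
        * (Λ i.castSucc - Λ j.castSucc) * (δ i - δ j) * (b i j) ^ 2) ≤ 0 :=
    Finset.sum_nonpos fun i _ => Finset.sum_nonpos fun j _ => hpt i j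
  constructor
  · rw [h1]; linarith [h2]
  · rw [h1]; linarith [h2, hsum]
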